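/- For a directed graph G = ([s], E) in which every vertex has positive out-degree, the largest singular value σ₁ of the equal-neighbor adjacency matrix A satisfies σ₁² ≤ 1 + φ, where φ = (d_max⁻ − d_min⁺)/d_min⁺ and d_max⁻ is the maximum in-degree of G. -/

import Mathlib

open Finset Matrix

/-- The out-degree of vertex `j`: the number of `i` with an edge from `j` to `i`. -/
def outDeg {n : ℕ} (E : Fin n → Fin n → Bool) (j : Fin n) : ℕ :=
  (Finset.univ.filter fun i => E j i = true).card

/-- The in-degree of vertex `j`: the number of `i` with an edge from `i` to `j`. -/
def inDeg {n : ℕ} (E : Fin n → Fin n → Bool) (j : Fin n) : ℕ :=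
  (Finset.univ.filter fun i => E i j = true).card

/-- Minimum out-degree. -/
noncomputable def dminOut {n : ℕ} (E : Fin n → Fin n → Bool) : ℕ := sInf (Set.range (outDeg E))

/-- Maximum out-degree. -/
noncomputable def dmaxOut {n : ℕ} (E : Fin n → Fin n → Bool) : ℕ := sSup (Set.range (outDeg E))

/-- Maximum in-degree. -/
noncomputable def dmaxIn {n : ℕ} (E : Fin n → Fin n → Bool) : ℕ := sSup (Set.range (inDeg E))

/-- The equal-neighbor adjacency matrix: `A i j = 1 / d_j⁺` if there is an edge from `j`
to `i`, and `0` otherwise. -/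
noncomputable def eqNbrMatrix {n : ℕ} (E : Fin n → Fin n → Bool) :
    Matrix (Fin n) (Fin n) ℝ :=
  fun i j => if E j i = true then (outDeg E j : ℝ)⁻¹ else 0

/-- The `k`-th largest value (counted with multiplicity, `k = 0` being the largest) of a
real-valued function on a finite index type; junk value `0` if `k ≥ card ι`. -/
noncomputable def kthLargest {ι : Type*} [Fintype ι] (f : ι → ℝ) (k : ℕ) : ℝ :=
  if k < Fintype.card ι then
    ((Finset.univ.val.map f).sort (· ≤ ·)).getD (Fintype.card ι - 1 - k) 0
  else 0

/-- The `k`-th largest singular value of a real square matrix (`k = 0` is the largest),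
i.e. the `k`-th largest square root of an eigenvalue of `AᴴA`. -/
noncomputable def sval {ι : Type*} [Fintype ι] [DecidableEq ι] (A : Matrix ι ι ℝ) (k : ℕ) : ℝ :=
  kthLargest (fun i => Real.sqrt ((Matrix.isHermitian_conjTranspose_mul_self A).eigenvalues i)) k

section test
variable {s : ℕ} (E : Fin s → Fin s → Bool)

lemma dminOut_le (j : Fin s) : dminOut E ≤ outDeg E j :=
  Nat.sInf_le ⟨j, rfl⟩

lemma dminOut_pos (hs : 0 < s) (hdeg : ∀ j : Fin s, 0 < outDeg E j) : 0 < dminOut E := by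
  have : Nonempty (Fin s) := ⟨⟨0, hs⟩⟩
  obtain ⟨j, hj⟩ := Nat.sInf_mem (Set.range_nonempty (outDeg E))
  rw [dminOut, ← hj]; exact hdeg j

lemma le_dmaxIn (j : Fin s) : inDeg E j ≤ dmaxIn E :=
  le_csSup (Set.Finite.bddAbove (Set.finite_range _)) ⟨j, rfl⟩

lemma row_sum_le (hs : 0 < s) (hdeg : ∀ j : Fin s, 0 < outDeg E j) (i : Fin s) :
    ∑ j, eqNbrMatrix E i j ≤ (dmaxIn E : ℝ) / (dminOut E : ℝ) := by
  have hb : (0:ℝ) < (dminOut E : ℝ) := by exact_mod_cast dminOut_pos E hs hdeg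
  calc ∑ j, eqNbrMatrix E i j
      = ∑ j ∈ univ.filter (fun j => E j i = true), (outDeg E j : ℝ)⁻¹ := by
        simp only [eqNbrMatrix]
        rw [Finset.sum_filter]
    _ ≤ ∑ _j ∈ univ.filter (fun j => E j i = true), (dminOut E : ℝ)⁻¹ := by
        refine Finset.sum_le_sum fun j _ => ?_
        apply inv_anti₀ hb
        exact_mod_cast dminOut_le E j
    _ = (inDeg E i : ℝ) * (dminOut E : ℝ)⁻¹ := by
        rw [Finset.sum_const, inDeg]; simp [mul_comm]
    _ ≤ (dmaxIn E : ℝ) / (dminOut E : ℝ) := by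
        rw [div_eq_mul_inv]
        gcongr
        exact_mod_cast le_dmaxIn E i

lemma col_sum_eq (hdeg : ∀ j : Fin s, 0 < outDeg E j) (j : Fin s) :
    ∑ i, eqNbrMatrix E i j = 1 := by
  have h0 : (outDeg E j : ℝ) ≠ 0 := (Nat.cast_pos.mpr (hdeg j)).ne'
  simp only [eqNbrMatrix]
  rw [Finset.sum_ite, Finset.sum_const, Finset.sum_const_zero, add_zero,
    show (univ.filter (fun i => E j i = true)).card = outDeg E j from rfl,
    nsmul_eq_mul, mul_inv_cancel₀ h0]

lemma entry_nonneg (i j : Fin s) : 0 ≤ eqNbrMatrix E i j := by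
  simp only [eqNbrMatrix]
  split <;> positivity

lemma key_quad (hs : 0 < s) (hdeg : ∀ j : Fin s, 0 < outDeg E j) (w : Fin s → ℝ) :
    ∑ i, ((eqNbrMatrix E *ᵥ w) i) ^ 2 ≤ (dmaxIn E : ℝ) / (dminOut E : ℝ) * ∑ j, (w j) ^ 2 := by
  set A := eqNbrMatrix E
  set R := (dmaxIn E : ℝ) / (dminOut E : ℝ) with hR
  have hRnn : 0 ≤ R := by positivity
  have hAnn := entry_nonneg E
  calc ∑ i, ((A *ᵥ w) i) ^ 2
      ≤ ∑ i, (∑ j, A i j) * (∑ j, A i j * (w j) ^ 2) := by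
        refine Finset.sum_le_sum fun i _ => ?_
        have := Finset.sum_mul_sq_le_sq_mul_sq Finset.univ
          (fun j => Real.sqrt (A i j)) (fun j => Real.sqrt (A i j) * w j)
        simp only [mulVec, dotProduct]
        calc (∑ j, A i j * w j) ^ 2
            = (∑ j, Real.sqrt (A i j) * (Real.sqrt (A i j) * w j)) ^ 2 := by
              congr 1; refine Finset.sum_congr rfl fun j _ => ?_
              rw [← mul_assoc, Real.mul_self_sqrt (hAnn i j)]
          _ ≤ (∑ j, Real.sqrt (A i j) ^ 2) * ∑ j, (Real.sqrt (A i j) * w j) ^ 2 := this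
          _ = (∑ j, A i j) * (∑ j, A i j * (w j) ^ 2) := by
              congr 1
              · exact Finset.sum_congr rfl fun j _ => Real.sq_sqrt (hAnn i j)
              · refine Finset.sum_congr rfl fun j _ => ?_
                rw [mul_pow, Real.sq_sqrt (hAnn i j)]
    _ ≤ ∑ i, R * (∑ j, A i j * (w j) ^ 2) := by
        refine Finset.sum_le_sum fun i _ => ?_
        have h1 : 0 ≤ ∑ j, A i j * (w j) ^ 2 :=
          Finset.sum_nonneg fun j _ => mul_nonneg (hAnn i j) (sq_nonneg _)
        exact mul_le_mul_of_nonneg_right (row_sum_le E hs hdeg i) h1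
    _ = R * ∑ j, (∑ i, A i j) * (w j) ^ 2 := by
        rw [← Finset.mul_sum, Finset.sum_comm]
        congr 1; exact Finset.sum_congr rfl fun j _ => (Finset.sum_mul ..).symm
    _ = R * ∑ j, (w j) ^ 2 := by
        congr 1; exact Finset.sum_congr rfl fun j _ => by rw [col_sum_eq E hdeg j, one_mul]

lemma eig_le (hs : 0 < s) (hdeg : ∀ j : Fin s, 0 < outDeg E j) (i : Fin s) :
    (Matrix.isHermitian_conjTranspose_mul_self (eqNbrMatrix E)).eigenvalues i
      ≤ (dmaxIn E : ℝ) / (dminOut E : ℝ) := by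
  set A := eqNbrMatrix E
  set hH := Matrix.isHermitian_conjTranspose_mul_self A
  set v : Fin s → ℝ := ⇑(hH.eigenvectorBasis i) with hv
  have hnorm : ∑ j, (v j) ^ 2 = 1 := by
    have h1 : (inner (𝕜 := ℝ) (hH.eigenvectorBasis i) (hH.eigenvectorBasis i)) = 1 := by
      rw [real_inner_self_eq_norm_sq, hH.eigenvectorBasis.orthonormal.1 i]; norm_num
    rw [← h1, PiLp.inner_apply]
    refine Finset.sum_congr rfl fun j _ => ?_
    simp [RCLike.inner_apply, starRingEnd_apply, sq, v]
  have key : ∀ w : Fin s → ℝ, RCLike.re (star w ⬝ᵥ ((Aᴴ * A) *ᵥ w)) = ∑ k, ((A *ᵥ w) k) ^ 2 := by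
    intro w
    rw [star_trivial, ← Matrix.mulVec_mulVec, Matrix.dotProduct_mulVec,
      show Aᴴ = Aᵀ from rfl, Matrix.vecMul_transpose, RCLike.re_to_real]
    simp [dotProduct, sq]
  have heig : hH.eigenvalues i = ∑ k, ((A *ᵥ v) k) ^ 2 := by
    rw [hH.eigenvalues_eq i]; exact key v
  calc hH.eigenvalues i = ∑ k, ((A *ᵥ v) k) ^ 2 := heig
    _ ≤ (dmaxIn E : ℝ) / (dminOut E : ℝ) * ∑ j, (v j) ^ 2 := key_quad E hs hdeg v
    _ = (dmaxIn E : ℝ) / (dminOut E : ℝ) := by rw [hnorm, mul_one]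

end test

lemma kthLargest_mem {ι : Type*} [Fintype ι] (f : ι → ℝ) (h : 0 < Fintype.card ι) :
    ∃ i, kthLargest f 0 = f i := by
  rw [kthLargest, if_pos h]
  have hlen : ((Finset.univ.val.map f).sort (· ≤ ·)).length = Fintype.card ι := by
    rw [Multiset.length_sort, Multiset.card_map]; rfl
  have hidx : Fintype.card ι - 1 - 0 < ((Finset.univ.val.map f).sort (· ≤ ·)).length := by
    rw [hlen]; omega
  rw [List.getD_eq_getElem _ _ hidx]
  have hmem := List.getElem_mem hidx
  rw [Multiset.mem_sort] at hmem
  obtain ⟨i, _, hi⟩ := Multiset.mem_map.mp hmem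
  exact ⟨i, hi.symm⟩

/-- For a digraph in which every vertex has positive out-degree, the largest singular value
of the equal-neighbor adjacency matrix satisfies `σ₁² ≤ 1 + φ`, where
`φ = (d_max⁻ − d_min⁺)/d_min⁺`. -/
theorem stmt7 (s : ℕ) (hs : 0 < s) (E : Fin s → Fin s → Bool)
    (hdeg : ∀ j : Fin s, 0 < outDeg E j)
    (φ : ℝ) (hφ : φ = ((dmaxIn E : ℝ) - (dminOut E : ℝ)) / (dminOut E : ℝ)) :
    sval (eqNbrMatrix E) 0 ^ 2 ≤ 1 + φ := by
  have hb : (0:ℝ) < (dminOut E : ℝ) := by exact_mod_cast dminOut_pos E hs hdeg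
  have hc : 0 < Fintype.card (Fin s) := by simpa using hs
  obtain ⟨i₀, hi₀⟩ := kthLargest_mem
    (fun i => Real.sqrt ((Matrix.isHermitian_conjTranspose_mul_self (eqNbrMatrix E)).eigenvalues i)) hc
  calc sval (eqNbrMatrix E) 0 ^ 2
      = Real.sqrt ((Matrix.isHermitian_conjTranspose_mul_self (eqNbrMatrix E)).eigenvalues i₀) ^ 2 := by
        rw [sval, hi₀]
    _ = (Matrix.isHermitian_conjTranspose_mul_self (eqNbrMatrix E)).eigenvalues i₀ :=
        Real.sq_sqrt (Matrix.eigenvalues_conjTranspose_mul_self_nonneg _ i₀)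
    _ ≤ (dmaxIn E : ℝ) / (dminOut E : ℝ) := eig_le E hs hdeg i₀
    _ = 1 + φ := by rw [hφ]; field_simp; ring
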